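/- If G is a torsion-free group, n ∈ ℕ, m > (n−1)², and f : {0,1}^m → G is a cubic function, then |f({0,1}^m)| > n. -/

import Mathlib

/-- A function `f : {0,1}^m → G` is cubic if there is a vector `(g₁,…,g_m)` of non-identity
elements such that `f(x₁,…,x_m) = g₁^{x₁} ⋯ g_m^{x_m}`. -/
def IsCubic {G : Type} [Group G] (m : ℕ) (f : (Fin m → Bool) → G) : Prop :=
  ∃ g : Fin m → G, (∀ i, g i ≠ 1) ∧
    ∀ x : Fin m → Bool, f x = (List.ofFn fun i => if x i then g i else 1).prod

/-- A monoid is torsion-free if every non-identity element has infinite order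
(the definition of `Monoid.IsTorsionFree` in the older Mathlib). -/
def Monoid.IsTorsionFree (G : Type*) [Monoid G] : Prop :=
  ∀ g : G, g ≠ 1 → ¬IsOfFinOrder g

private lemma update_comp_succ {G : Type} {m : ℕ} (h : Fin (m + 1) → G) (i : Fin m) (c : G) :
    (fun j : Fin m => Function.update h i.succ c j.succ) = Function.update (fun j => h j.succ) i c := by
  funext j
  by_cases hji : j = i
  · subst hji; simp
  · rw [Function.update_of_ne (by simpa [Fin.succ_inj] using hji),
      Function.update_of_ne hji]

private lemma prod_update {G : Type} [Group G] :
    ∀ (m : ℕ) (h : Fin m → G) (k : Fin m), (∀ j, k ≤ j → h j = 1) → ∀ c : G,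
      (List.ofFn (Function.update h k c)).prod = (List.ofFn h).prod * c := by
  intro m
  induction m with
  | zero => exact fun h k => absurd k.2 (by omega)
  | succ m ih =>
    intro h k hone c
    rcases Fin.eq_zero_or_eq_succ k with h0 | ⟨i, rfl⟩
    · subst h0
      have hall : ∀ j, h j = 1 := fun j => hone j (Fin.zero_le j)
      have h1 : (List.ofFn fun i => h i.succ).prod = 1 := by
        apply List.prod_eq_one
        intro a ha
        obtain ⟨i, rfl⟩ := List.mem_ofFn.mp ha
        exact hall _
      have h2 : (List.ofFn fun i => Function.update h 0 c i.succ).prod = 1 := by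
        apply List.prod_eq_one
        intro a ha
        obtain ⟨i, rfl⟩ := List.mem_ofFn.mp ha
        rw [Function.update_of_ne (Fin.succ_ne_zero i)]
        exact hall _
      rw [List.ofFn_succ, List.ofFn_succ, List.prod_cons, List.prod_cons, h1, h2,
        Function.update_self, hall 0, mul_one, one_mul, one_mul]
    · rw [List.ofFn_succ, List.ofFn_succ, List.prod_cons, List.prod_cons,
        Function.update_of_ne (Fin.succ_ne_zero i).symm, update_comp_succ,
        ih (fun j => h j.succ) i (fun j hj => hone j.succ (by simpa [Fin.succ_le_succ_iff] using hj)) c,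
        mul_assoc]

private lemma aux {G : Type} [Group G] (htf : Monoid.IsTorsionFree G) (m : ℕ)
    (g : Fin m → G) (hg1 : ∀ i, g i ≠ 1) :
    ∀ k, k ≤ m → ∃ S : Finset G, k + 1 ≤ S.card ∧ ∀ a ∈ S, ∃ x : Fin m → Bool,
      (∀ j : Fin m, k ≤ j.val → x j = false) ∧
      (List.ofFn fun i => if x i then g i else 1).prod = a := by
  classical
  intro k
  induction k with
  | zero =>
    intro _
    refine ⟨{1}, by simp, ?_⟩
    intro a ha
    rw [Finset.mem_singleton] at ha
    refine ⟨fun _ => false, fun j _ => rfl, ?_⟩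
    rw [ha]
    apply List.prod_eq_one
    intro b hb
    obtain ⟨i, rfl⟩ := List.mem_ofFn.mp hb
    simp
  | succ k ihk =>
    intro hk1
    have hk : k < m := hk1
    obtain ⟨S, hcard, hmem⟩ := ihk (le_of_lt hk)
    set kk : Fin m := ⟨k, hk⟩ with hkk
    set gk : G := g kk with hgk
    -- there is a ∈ S with a * gk ∉ S
    have hclaim : ∃ a ∈ S, a * gk ∉ S := by
      by_contra hcon
      push_neg at hcon
      have hne : S.Nonempty := Finset.card_pos.mp (by omega)
      obtain ⟨a, ha⟩ := hne
      have hpow : ∀ j : ℕ, a * gk ^ j ∈ S := by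
        intro j
        induction j with
        | zero => simpa using ha
        | succ j ihj =>
          have := hcon _ ihj
          rwa [mul_assoc, ← pow_succ] at this
      obtain ⟨i, j, hij, heq⟩ := Finite.exists_ne_map_eq_of_infinite
        (fun j : ℕ => (⟨a * gk ^ j, hpow j⟩ : {x // x ∈ S}))
      have heq' : a * gk ^ i = a * gk ^ j := by simpa using heq
      have heq'' : gk ^ i = gk ^ j := mul_left_cancel heq'
      rcases (Ne.lt_or_gt hij) with hlt | hlt
      · have h1 : gk ^ i * gk ^ (j - i) = gk ^ i * 1 := by
          rw [← pow_add, Nat.add_sub_cancel' hlt.le, heq'', mul_one]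
        have h2 : gk ^ (j - i) = 1 := mul_left_cancel h1
        exact htf gk (hg1 kk) (isOfFinOrder_iff_pow_eq_one.mpr ⟨j - i, by omega, h2⟩)
      · have h1 : gk ^ j * gk ^ (i - j) = gk ^ j * 1 := by
          rw [← pow_add, Nat.add_sub_cancel' hlt.le, ← heq'', mul_one]
        have h2 : gk ^ (i - j) = 1 := mul_left_cancel h1
        exact htf gk (hg1 kk) (isOfFinOrder_iff_pow_eq_one.mpr ⟨i - j, by omega, h2⟩)
    obtain ⟨a, haS, hanot⟩ := hclaim
    refine ⟨insert (a * gk) S, ?_, ?_⟩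
    · rw [Finset.card_insert_of_notMem hanot]; omega
    · intro b hb
      rcases Finset.mem_insert.mp hb with hb | hb
      · -- b = a * gk
        obtain ⟨x, hsupp, hx⟩ := hmem a haS
        refine ⟨Function.update x kk true, ?_, ?_⟩
        · intro j hj
          rw [Function.update_of_ne ?_]
          · exact hsupp j (by omega)
          · intro hcon
            have h2 : k + 1 ≤ k := by simpa [hcon, hkk] using hj
            omega
        · have hfun : (fun i => if Function.update x kk true i then g i else 1)
              = Function.update (fun i => if x i then g i else 1) kk gk := by
            funext i
            by_cases hik : i = kk
            · subst hik; simp [hgk]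
            · rw [Function.update_of_ne hik, Function.update_of_ne hik]
          rw [hb, hfun, prod_update m _ kk ?_ gk, hx]
          intro j hj
          simp [hsupp j (by simpa [Fin.le_def, hkk] using hj)]
      · -- b ∈ S
        obtain ⟨x, hsupp, hx⟩ := hmem b hb
        exact ⟨x, fun j hj => hsupp j (by omega), hx⟩

theorem stmt_7 {G : Type} [Group G] (htf : Monoid.IsTorsionFree G)
    (n m : ℕ) (hn : 0 < n) (hm : m > (n - 1) ^ 2)
    (f : (Fin m → Bool) → G) (hf : IsCubic m f) :
    n < (Set.range f).ncard := by
  obtain ⟨g, hg1, hgf⟩ := hf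
  obtain ⟨S, hcard, hmem⟩ := aux htf m g hg1 m le_rfl
  have hsub : (S : Set G) ⊆ Set.range f := by
    intro a ha
    obtain ⟨x, _, hx⟩ := hmem a ha
    exact ⟨x, by rw [hgf x, hx]⟩
  have hfin : (Set.range f).Finite := Set.finite_range f
  have hle : S.card ≤ (Set.range f).ncard := by
    rw [← Set.ncard_coe_finset]
    exact Set.ncard_le_ncard hsub hfin
  have hsq : n - 1 ≤ (n - 1) ^ 2 := Nat.le_self_pow two_ne_zero (n - 1)
  omega
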